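/- Let m ∈ ℕ and let A = ℂ^{m×m} be the C*-algebra of m×m complex matrices with the operator norm. Let M be a Banach A-module and M₀ an A-submodule of M. If the only bounded A-linear map f : M → A satisfying f(u) = 0 for all u ∈ M₀ is the zero map, then M₀ is dense in M. -/

import Mathlib

open scoped Matrix.Norms.L2Operator

/-- A Banach module over the C*-algebra `A = ℂ^{m×m}` of `m × m` complex matrices with the
operator norm: a complex Banach space `M` with a right `A`-module structure satisfying
`‖u·c‖ ≤ ‖u‖ ‖c‖`, compatibly with the complex scalar actions. -/
structure BanachMatrixModule (m : ℕ) (M : Type*) [NormedAddCommGroup M] [NormedSpace ℂ M] where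
  smul : M → Matrix (Fin m) (Fin m) ℂ → M
  add_smul : ∀ (u v : M) (c : Matrix (Fin m) (Fin m) ℂ), smul (u + v) c = smul u c + smul v c
  smul_add : ∀ (u : M) (c d : Matrix (Fin m) (Fin m) ℂ), smul u (c + d) = smul u c + smul u d
  smul_mul : ∀ (u : M) (c d : Matrix (Fin m) (Fin m) ℂ), smul u (c * d) = smul (smul u c) d
  smul_one : ∀ u : M, smul u 1 = u
  smul_complex : ∀ (α : ℂ) (u : M) (c : Matrix (Fin m) (Fin m) ℂ),
    smul u (α • c) = α • smul u c
  norm_smul_le : ∀ (u : M) (c : Matrix (Fin m) (Fin m) ℂ), ‖smul u c‖ ≤ ‖u‖ * ‖c‖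

/-- **Triviality of the orthogonal complement implies density.** If the only bounded
`A`-linear map `f : M → A` (`A = ℂ^{m×m}` with the operator norm) vanishing on an
`A`-submodule `M₀` is the zero map, then `M₀` is dense in `M`. -/
theorem dense_of_orthogonal_complement_trivial {m : ℕ} {M : Type*}
    [NormedAddCommGroup M] [NormedSpace ℂ M] [CompleteSpace M]
    (B : BanachMatrixModule m M)
    (M₀ : Set M) (h_zero : (0 : M) ∈ M₀)
    (h_add : ∀ u ∈ M₀, ∀ v ∈ M₀, u + v ∈ M₀)
    (h_smul : ∀ u ∈ M₀, ∀ c : Matrix (Fin m) (Fin m) ℂ, B.smul u c ∈ M₀)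
    (h_perp : ∀ f : M → Matrix (Fin m) (Fin m) ℂ,
      (∀ u v : M, f (u + v) = f u + f v) →
      (∀ (α : ℂ) (u : M), f (α • u) = α • f u) →
      (∀ (u : M) (c : Matrix (Fin m) (Fin m) ℂ), f (B.smul u c) = f u * c) →
      (∃ C : ℝ, ∀ u : M, ‖f u‖ ≤ C * ‖u‖) →
      (∀ u ∈ M₀, f u = 0) →
      ∀ u : M, f u = 0) :
    Dense M₀ := by
  by_contra hdense
  simp only [Dense, not_forall] at hdense
  obtain ⟨x, hx⟩ := hdense
  -- `M₀` as a `ℂ`-submodule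
  have hCsmul : ∀ (α : ℂ) (u : M), α • u = B.smul u (α • 1) := fun α u => by
    rw [B.smul_complex, B.smul_one]
  let p : Submodule ℂ M :=
    { carrier := M₀
      add_mem' := fun {a b} ha hb => h_add a ha b hb
      zero_mem' := h_zero
      smul_mem' := fun α u hu => by
        show α • u ∈ M₀
        rw [hCsmul]
        exact h_smul u hu _ }
  let q := p.topologicalClosure
  haveI hq : IsClosed (q : Set M) := p.isClosed_topologicalClosure
  have hxq : x ∉ q := fun h => hx (by have h' : x ∈ (p.topologicalClosure : Set M) := h; rw [Submodule.topologicalClosure_coe] at h'; exact h')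
  have hx0 : (Submodule.Quotient.mk x : M ⧸ q) ≠ 0 := by
    simpa [Submodule.Quotient.mk_eq_zero] using hxq
  obtain ⟨g, hg⟩ := SeparatingDual.exists_ne_zero (R := ℂ) hx0
  -- the functional
  let φL : M →L[ℂ] ℂ := LinearMap.mkContinuous (g.toLinearMap.comp q.mkQ) ‖g‖ (fun u => by
    simpa using le_trans (g.le_opNorm _)
      (mul_le_mul_of_nonneg_left (Submodule.Quotient.norm_mk_le q u) (norm_nonneg g)))
  set φ : M → ℂ := fun u => φL u with hφdef
  have φ_mk : ∀ u : M, φ u = g (Submodule.Quotient.mk u) := fun u => rfl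
  have φ_bound : ∀ u : M, ‖φ u‖ ≤ ‖g‖ * ‖u‖ := fun u =>
    le_trans (g.le_opNorm _)
      (mul_le_mul_of_nonneg_left (Submodule.Quotient.norm_mk_le q u) (norm_nonneg g))
  have φ_zero : ∀ u ∈ M₀, φ u = 0 := fun u hu => by
    have : (Submodule.Quotient.mk u : M ⧸ q) = 0 :=
      (Submodule.Quotient.mk_eq_zero q).2 (Submodule.le_topologicalClosure p hu)
    rw [φ_mk, this, map_zero]
  -- smul auxiliary facts
  have smul_zero' : ∀ u : M, B.smul u 0 = 0 := fun u => by
    have h := B.smul_add u 0 0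
    rw [add_zero] at h
    have h2 : B.smul u 0 + 0 = B.smul u 0 + B.smul u 0 := by rw [add_zero]; exact h
    exact (add_left_cancel h2).symm
  have smul_sum : ∀ (u : M) (s : Finset (Fin m)) (c : Fin m → Matrix (Fin m) (Fin m) ℂ),
      B.smul u (∑ k ∈ s, c k) = ∑ k ∈ s, B.smul u (c k) := by
    intro u s c
    induction s using Finset.cons_induction with
    | empty => simpa using smul_zero' u
    | cons a s ha ih => rw [Finset.sum_cons, Finset.sum_cons, B.smul_add, ih]
  have smulC : ∀ (α : ℂ) (u : M) (c : Matrix (Fin m) (Fin m) ℂ),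
      B.smul (α • u) c = α • B.smul u c := by
    intro α u c
    rw [hCsmul α u, ← B.smul_mul, smul_mul_assoc, one_mul, B.smul_complex]
  -- the standard basis matrices
  set E : Fin m → Fin m → Matrix (Fin m) (Fin m) ℂ := fun i j => Matrix.single i j 1
    with hE
  have key_mul : ∀ (c : Matrix (Fin m) (Fin m) ℂ) (i j : Fin m),
      c * E j i = ∑ k, c k j • E k i := by
    intro c i j
    ext p' q'
    simp [hE, Matrix.mul_apply, Matrix.single, Finset.sum_apply, Matrix.sum_apply, ite_and]
  have one_sum : (1 : Matrix (Fin m) (Fin m) ℂ) = ∑ i, E i i := by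
    ext p' q'
    simp [hE, Matrix.single, Matrix.one_apply, Matrix.sum_apply, ite_and]
  -- the A-linear functional
  set f : M → Matrix (Fin m) (Fin m) ℂ :=
    fun u => Matrix.of fun i j => φ (B.smul u (E j i)) with hf
  have f_apply : ∀ (u : M) (i j : Fin m), f u i j = φ (B.smul u (E j i)) := fun u i j => rfl
  have f_add : ∀ u v : M, f (u + v) = f u + f v := by
    intro u v
    ext i j
    simp [f_apply, B.add_smul, hφdef, Matrix.add_apply]
  have f_smul : ∀ (α : ℂ) (u : M), f (α • u) = α • f u := by
    intro α u
    ext i j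
    simp [f_apply, smulC, hφdef, Matrix.smul_apply]
  have f_mul : ∀ (u : M) (c : Matrix (Fin m) (Fin m) ℂ), f (B.smul u c) = f u * c := by
    intro u c
    ext i j
    rw [Matrix.mul_apply]
    calc f (B.smul u c) i j = φ (B.smul u (c * E j i)) := by rw [f_apply, B.smul_mul]
      _ = φ (∑ k, c k j • B.smul u (E k i)) := by
          rw [key_mul, smul_sum]
          exact congrArg φ (Finset.sum_congr rfl fun k _ => B.smul_complex _ _ _)
      _ = ∑ k, c k j * φ (B.smul u (E k i)) := by
          show φL _ = ∑ k, c k j * φL _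
          rw [map_sum]
          exact Finset.sum_congr rfl fun k _ => by rw [map_smul, smul_eq_mul]
      _ = ∑ k, f u i k * c k j := Finset.sum_congr rfl fun k _ => by
          rw [f_apply, mul_comm]
  have f_bound : ∃ C : ℝ, ∀ u : M, ‖f u‖ ≤ C * ‖u‖ := by
    refine ⟨∑ i, ∑ j, ‖g‖ * ‖E j i‖ * ‖E i j‖, fun u => ?_⟩
    have hrepr : f u = ∑ i, ∑ j, f u i j • E i j := by
      conv_lhs => rw [Matrix.matrix_eq_sum_single (f u)]
      refine Finset.sum_congr rfl fun i _ => Finset.sum_congr rfl fun j _ => ?_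
      rw [hE, Matrix.smul_single, smul_eq_mul, mul_one]
    calc ‖f u‖ = ‖∑ i, ∑ j, f u i j • E i j‖ := by rw [← hrepr]
      _ ≤ ∑ i, ∑ j, ‖f u i j • E i j‖ :=
          le_trans (norm_sum_le _ _) (Finset.sum_le_sum fun i _ => norm_sum_le _ _)
      _ ≤ ∑ i, ∑ j, ‖g‖ * ‖E j i‖ * ‖E i j‖ * ‖u‖ := by
          refine Finset.sum_le_sum fun i _ => Finset.sum_le_sum fun j _ => ?_
          rw [norm_smul]
          calc ‖f u i j‖ * ‖E i j‖ ≤ ‖g‖ * (‖u‖ * ‖E j i‖) * ‖E i j‖ := by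
                refine mul_le_mul_of_nonneg_right ?_ (norm_nonneg _)
                rw [f_apply]
                exact le_trans (φ_bound _)
                  (mul_le_mul_of_nonneg_left (B.norm_smul_le _ _) (norm_nonneg g))
            _ = ‖g‖ * ‖E j i‖ * ‖E i j‖ * ‖u‖ := by ring
      _ = (∑ i, ∑ j, ‖g‖ * ‖E j i‖ * ‖E i j‖) * ‖u‖ := by
          rw [Finset.sum_mul]
          exact Finset.sum_congr rfl fun i _ => (Finset.sum_mul _ _ _).symm
  have f_vanish : ∀ u ∈ M₀, f u = 0 := by
    intro u hu
    ext i j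
    rw [f_apply, φ_zero _ (h_smul u hu _)]
    simp
  have hfz := h_perp f f_add f_smul f_mul f_bound f_vanish
  have hφx : φ x = 0 := by
    have h1 : x = B.smul x (∑ i, E i i) := by rw [← one_sum, B.smul_one]
    calc φ x = φ (∑ i, B.smul x (E i i)) := by rw [← smul_sum]; exact congrArg φ h1
      _ = ∑ i, φ (B.smul x (E i i)) := by show φL _ = ∑ i, φL _; rw [map_sum]
      _ = ∑ i, f x i i := Finset.sum_congr rfl fun i _ => (f_apply x i i).symm
      _ = 0 := by simp [hfz]
  exact hg (by rw [← φ_mk]; exact hφx)
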